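/- Let p be a prime and ℓ ≥ 1. Inside A ⊗ A where A = F_p[x]/x^{p^ℓ}, the element x' = x⊗1 − 1⊗x satisfies (x')^{p^ℓ} = 0, and the subalgebra C'' generated over F_p by x' is isomorphic to F_p[x']/(x')^{p^ℓ} ≅ A; moreover A⊗A ≅ (A⊗1) ⊗ C'' as augmented commutative F_p-algebras. -/

import Mathlib

/-!
STATEMENT 9: For `A = F_p[x]/x^{p^ℓ}`, inside `A ⊗ A` the element
`x' = x⊗1 − 1⊗x` satisfies `(x')^{p^ℓ} = 0`; the subalgebra `C''` generated by
`x'` is isomorphic to `F_p[x']/(x')^{p^ℓ} ≅ A` (rendered: there is an algebra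
map `ψ : A → A⊗A` with `ψ(x) = x'` which is injective, so its image `C''` is
a truncated polynomial algebra on `x'`); and `A ⊗ A ≅ (A⊗1) ⊗ C''` as
augmented commutative `F_p`-algebras, via the multiplication map `Φ`
determined by `a⊗1 ↦ a⊗1` and `1⊗x ↦ x'`.
-/

open Polynomial TensorProduct

set_option maxHeartbeats 2000000 in
set_option synthInstance.maxHeartbeats 400000 in
theorem stmt9_aux (p ℓ : ℕ) [Fact p.Prime]
    (aug : (Polynomial (ZMod p) ⧸ Ideal.span {(X : Polynomial (ZMod p)) ^ (p ^ ℓ)})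
      →ₐ[ZMod p] ZMod p)
    (haugx : aug (Ideal.Quotient.mk _ (X : Polynomial (ZMod p))) = 0) :
    letI F := ZMod p
    letI A := Polynomial F ⧸ Ideal.span {(X : Polynomial F) ^ (p ^ ℓ)}
    letI xbar : A := Ideal.Quotient.mk _ (X : Polynomial F)
    letI x' : A ⊗[F] A := xbar ⊗ₜ[F] 1 - 1 ⊗ₜ[F] xbar
    letI augT : A ⊗[F] A →ₐ[F] F :=
      Algebra.TensorProduct.lift aug aug (fun _ _ => Commute.all _ _)
    x' ^ (p ^ ℓ) = 0 ∧
    (∃ ψ : A →ₐ[F] A ⊗[F] A, ψ xbar = x' ∧ Function.Injective ψ) ∧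
    (∃ Φ : A ⊗[F] A →ₐ[F] A ⊗[F] A,
      (∀ a : A, Φ (a ⊗ₜ[F] 1) = a ⊗ₜ[F] 1) ∧
      Φ (1 ⊗ₜ[F] xbar) = x' ∧
      Function.Bijective Φ ∧
      augT.comp Φ = augT) := by
  set xbar : Polynomial (ZMod p) ⧸ Ideal.span {(X : Polynomial (ZMod p)) ^ (p ^ ℓ)} :=
    Ideal.Quotient.mk _ (X : Polynomial (ZMod p)) with hxbar
  set x' := xbar ⊗ₜ[ZMod p] 1 - 1 ⊗ₜ[ZMod p] xbar with hx'def
  set augT := Algebra.TensorProduct.lift aug aug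
    (fun (_ : _) (_ : _) => Commute.all _ _) with haugT
  -- basic facts
  have hx : xbar ^ (p ^ ℓ) = 0 := by
    rw [hxbar, ← map_pow]
    exact Ideal.Quotient.eq_zero_iff_mem.mpr (Ideal.subset_span rfl)
  -- characteristic p
  haveI : CharP ((Polynomial (ZMod p) ⧸ Ideal.span {(X : Polynomial (ZMod p)) ^ (p ^ ℓ)})
      ⊗[ZMod p] (Polynomial (ZMod p) ⧸ Ideal.span {(X : Polynomial (ZMod p)) ^ (p ^ ℓ)})) p := by
    have hinj : Function.Injective (@algebraMap (ZMod p)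
        ((Polynomial (ZMod p) ⧸ Ideal.span {(X : Polynomial (ZMod p)) ^ (p ^ ℓ)})
          ⊗[ZMod p] (Polynomial (ZMod p) ⧸ Ideal.span {(X : Polynomial (ZMod p)) ^ (p ^ ℓ)})) _ Algebra.TensorProduct.instSemiring _) := by
      intro a b h
      have := congrArg augT h
      rwa [AlgHom.commutes, AlgHom.commutes, Algebra.algebraMap_self,
        RingHom.id_apply, RingHom.id_apply] at this
    exact charP_of_injective_algebraMap hinj p
  have hx' : x' ^ (p ^ ℓ) = 0 := by
    have hsub := sub_pow_char_pow (p := p) (n := ℓ)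
      (xbar ⊗ₜ[ZMod p] (1 : Polynomial (ZMod p) ⧸ Ideal.span {(X : Polynomial (ZMod p)) ^ (p ^ ℓ)}))
      ((1 : Polynomial (ZMod p) ⧸ Ideal.span {(X : Polynomial (ZMod p)) ^ (p ^ ℓ)}) ⊗ₜ[ZMod p] xbar)
    rw [hx'def, hsub, Algebra.TensorProduct.tmul_pow,
      Algebra.TensorProduct.tmul_pow, one_pow, hx]
    simp
  -- extensionality: alg homs out of A are determined by value at xbar
  have hgen : ∀ {B : Type} [Semiring B] [Algebra (ZMod p) B]
      (f g : (Polynomial (ZMod p) ⧸ Ideal.span {(X : Polynomial (ZMod p)) ^ (p ^ ℓ)}) →ₐ[ZMod p] B),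
      f xbar = g xbar → f = g := by
    intro B _ _ f g h
    refine Ideal.Quotient.algHom_ext _ (Polynomial.algHom_ext ?_)
    simpa using h
  -- ψ
  have key : ∀ a ∈ Ideal.span {(X : Polynomial (ZMod p)) ^ (p ^ ℓ)}, aeval x' a = 0 := by
    intro a ha
    rw [Ideal.mem_span_singleton] at ha
    obtain ⟨b, rfl⟩ := ha
    rw [map_mul (aeval x'), aeval_X_pow]
    have := mul_eq_zero_of_left hx' ((aeval x') b); exact this
  set ψ := Ideal.Quotient.liftₐ (Ideal.span {(X : Polynomial (ZMod p)) ^ (p ^ ℓ)}) (aeval x') key with hψ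
  have hψx : ψ xbar = x' := by
    rw [hψ, hxbar, Ideal.Quotient.liftₐ_apply]
    erw [Ideal.Quotient.lift_mk]
    simp
  refine ⟨hx', ?_, ?_⟩
  · -- retraction π
    set π := Algebra.TensorProduct.lift
        (AlgHom.id (ZMod p) (Polynomial (ZMod p) ⧸ Ideal.span {(X : Polynomial (ZMod p)) ^ (p ^ ℓ)}))
        ((Algebra.ofId (ZMod p) _).comp aug)
        (fun (_ : _) (_ : _) => Commute.all _ _) with hπ
    have hπx : π x' = xbar := by
      rw [hx'def, map_sub, hπ, Algebra.TensorProduct.lift_tmul,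
        Algebra.TensorProduct.lift_tmul]
      simp [haugx, Algebra.ofId]
    have hcomp : π.comp ψ = AlgHom.id _ _ := by
      apply hgen
      simp [hψx, hπx]
    have hretr : ∀ a, π (ψ a) = a := fun a => AlgHom.congr_fun hcomp a
    exact ⟨ψ, hψx, fun a b h => by rw [← hretr a, ← hretr b, h]⟩
  · -- Φ
    set Φ : ((Polynomial (ZMod p) ⧸ Ideal.span {(X : Polynomial (ZMod p)) ^ (p ^ ℓ)})
          ⊗[ZMod p] (Polynomial (ZMod p) ⧸ Ideal.span {(X : Polynomial (ZMod p)) ^ (p ^ ℓ)}))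
        →ₐ[ZMod p] ((Polynomial (ZMod p) ⧸ Ideal.span {(X : Polynomial (ZMod p)) ^ (p ^ ℓ)})
          ⊗[ZMod p] (Polynomial (ZMod p) ⧸ Ideal.span {(X : Polynomial (ZMod p)) ^ (p ^ ℓ)})) :=
      Algebra.TensorProduct.productMap (R := ZMod p)
        (A := Polynomial (ZMod p) ⧸ Ideal.span {(X : Polynomial (ZMod p)) ^ (p ^ ℓ)})
        (B := Polynomial (ZMod p) ⧸ Ideal.span {(X : Polynomial (ZMod p)) ^ (p ^ ℓ)})
        (S := (Polynomial (ZMod p) ⧸ Ideal.span {(X : Polynomial (ZMod p)) ^ (p ^ ℓ)})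
          ⊗[ZMod p] (Polynomial (ZMod p) ⧸ Ideal.span {(X : Polynomial (ZMod p)) ^ (p ^ ℓ)}))
        Algebra.TensorProduct.includeLeft ψ with hΦ
    have hleft : ∀ a : Polynomial (ZMod p) ⧸ Ideal.span {(X : Polynomial (ZMod p)) ^ (p ^ ℓ)},
        Φ (a ⊗ₜ[ZMod p] 1) = a ⊗ₜ[ZMod p] 1 := by
      intro a
      rw [hΦ, Algebra.TensorProduct.productMap_left_apply,
        Algebra.TensorProduct.includeLeft_apply]
    have hright : Φ (1 ⊗ₜ[ZMod p] xbar) = x' := by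
      rw [hΦ, Algebra.TensorProduct.productMap_right_apply]
      exact hψx
    have hΦΦ : Φ.comp Φ = AlgHom.id _ _ := by
      apply Algebra.TensorProduct.ext
      · apply hgen
        simp only [AlgHom.restrictScalars_apply, AlgHom.comp_apply, Algebra.TensorProduct.includeLeft_apply,
          AlgHom.coe_id, id_eq]
        rw [hleft, hleft]
      · apply hgen
        simp only [AlgHom.restrictScalars_apply, AlgHom.comp_apply, Algebra.TensorProduct.includeRight_apply,
          AlgHom.coe_id, id_eq]
        rw [hright, hx'def, map_sub, hleft, hright, hx'def]
        exact sub_sub_cancel _ _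
    have hΦΦ' : ∀ z, Φ (Φ z) = z := fun z => AlgHom.congr_fun hΦΦ z
    refine ⟨Φ, hleft, hright, Function.bijective_iff_has_inverse.mpr ⟨Φ, hΦΦ', hΦΦ'⟩, ?_⟩
    apply Algebra.TensorProduct.ext
    · apply hgen
      simp only [AlgHom.restrictScalars_apply, AlgHom.comp_apply, Algebra.TensorProduct.includeLeft_apply]
      rw [hleft]
    · apply hgen
      simp only [AlgHom.restrictScalars_apply, AlgHom.comp_apply, Algebra.TensorProduct.includeRight_apply]
      rw [hright, hx'def, map_sub]
      have h1 : augT (xbar ⊗ₜ[ZMod p] 1) = 0 := by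
        rw [haugT, Algebra.TensorProduct.lift_tmul]
        simp [haugx]
      have h2 : augT (1 ⊗ₜ[ZMod p] xbar) = 0 := by
        rw [haugT, Algebra.TensorProduct.lift_tmul]
        simp [haugx]
      rw [h1, h2, sub_zero]

theorem stmt9 (p ℓ : ℕ) [Fact p.Prime] (hℓ : 1 ≤ ℓ) :
    letI F := ZMod p
    letI A := Polynomial F ⧸ Ideal.span {(X : Polynomial F) ^ (p ^ ℓ)}
    letI xbar : A := Ideal.Quotient.mk _ (X : Polynomial F)
    letI x' : A ⊗[F] A := xbar ⊗ₜ[F] 1 - 1 ⊗ₜ[F] xbar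
    letI aug : A →ₐ[F] F := Ideal.Quotient.liftₐ _ (aeval (0 : F)) (by
      intro a ha
      rw [Ideal.mem_span_singleton] at ha
      obtain ⟨b, rfl⟩ := ha
      simp [zero_pow (pow_ne_zero ℓ (Fact.out (p := p.Prime)).ne_zero)])
    letI augT : A ⊗[F] A →ₐ[F] F :=
      Algebra.TensorProduct.lift aug aug (fun _ _ => Commute.all _ _)
    -- `(x')^{p^ℓ} = 0`
    x' ^ (p ^ ℓ) = 0 ∧
    -- `C'' = F_p[x'] ≅ F_p[x]/(x')^{p^ℓ} ≅ A`
    (∃ ψ : A →ₐ[F] A ⊗[F] A, ψ xbar = x' ∧ Function.Injective ψ) ∧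
    -- `A ⊗ A ≅ (A⊗1) ⊗ C''` via multiplication, compatibly with augmentations
    (∃ Φ : A ⊗[F] A →ₐ[F] A ⊗[F] A,
      (∀ a : A, Φ (a ⊗ₜ[F] 1) = a ⊗ₜ[F] 1) ∧
      Φ (1 ⊗ₜ[F] xbar) = x' ∧
      Function.Bijective Φ ∧
      augT.comp Φ = augT) := by
  refine stmt9_aux p ℓ _ ?_
  rw [Ideal.Quotient.liftₐ_apply]
  erw [Ideal.Quotient.lift_mk]
  simp
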